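/- Let (Ω, ℬ) be a measurable space and f : Ω × Ω → ℝ a bounded measurable symmetric function. Then either there exists a probability measure P on ℬ such that ∫ f(x,y) P(dy) ≤ 0 for P-almost every x, or for every probability measure P on ℬ one has ∬ f(x,y) P(dx)P(dy) > 0. -/

import Mathlib

open MeasureTheory

namespace Stmt4Aux

variable {Ω : Type*} [MeasurableSpace Ω]

noncomputable def g (f : Ω → Ω → ℝ) (P : Measure Ω) (x : Ω) : ℝ := ∫ y, f x y ∂P

noncomputable def En (f : Ω → Ω → ℝ) (P : Measure Ω) : ℝ := ∫ x, g f P x ∂P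

lemma integrable_of_bound (P : Measure Ω) [IsFiniteMeasure P] (h : Ω → ℝ)
    (hm : Measurable h) (C : ℝ) (hb : ∀ x, |h x| ≤ C) : Integrable h P :=
  ⟨hm.aestronglyMeasurable, HasFiniteIntegral.of_bounded (C := C)
    (Filter.Eventually.of_forall fun x => by simpa [Real.norm_eq_abs] using hb x)⟩

lemma abs_integral_le (P : Measure Ω) [IsProbabilityMeasure P] (h : Ω → ℝ) (C : ℝ)
    (hb : ∀ x, |h x| ≤ C) : |∫ x, h x ∂P| ≤ C := by
  have := norm_integral_le_of_norm_le_const (μ := P) (f := h) (C := C)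
    (Filter.Eventually.of_forall fun x => by simpa [Real.norm_eq_abs] using hb x)
  simpa [Real.norm_eq_abs] using this

variable {f : Ω → Ω → ℝ} (hmeas : Measurable (Function.uncurry f)) {C : ℝ}
  (hC : ∀ x y, |f x y| ≤ C)

include hmeas hC
set_option linter.unusedSectionVars false

lemma meas_slice (x : Ω) : Measurable (f x) := by
  have : Measurable fun y => Function.uncurry f (x, y) := hmeas.comp measurable_prodMk_left
  exact this

lemma integrable_slice (P : Measure Ω) [IsFiniteMeasure P] (x : Ω) : Integrable (f x) P :=
  integrable_of_bound P (f x) (meas_slice hmeas hC x) C (hC x)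

lemma g_meas (P : Measure Ω) [SFinite P] : Measurable (g f P) := by
  have : StronglyMeasurable fun x => ∫ y, Function.uncurry f (x, y) ∂P :=
    hmeas.stronglyMeasurable.integral_prod_right'
  exact this.measurable

lemma g_abs_le (P : Measure Ω) [IsProbabilityMeasure P] (x : Ω) : |g f P x| ≤ C :=
  abs_integral_le P (f x) C (hC x)

lemma g_integrable (P : Measure Ω) [IsProbabilityMeasure P] (Q : Measure Ω)
    [IsFiniteMeasure Q] : Integrable (g f P) Q :=
  integrable_of_bound Q (g f P) (g_meas hmeas hC P) C (g_abs_le hmeas hC P)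

lemma En_abs_le (P : Measure Ω) [IsProbabilityMeasure P] : |En f P| ≤ C :=
  abs_integral_le P (g f P) C (g_abs_le hmeas hC P)

end Stmt4Aux

namespace Stmt4Aux

variable {Ω : Type*} [MeasurableSpace Ω]
variable {f : Ω → Ω → ℝ} {C : ℝ} (hmeas : Measurable (Function.uncurry f))
  (hC : ∀ x y, |f x y| ≤ C) (hsymm : ∀ x y, f x y = f y x)

lemma mix_prob (P : Measure Ω) [IsProbabilityMeasure P] (x : Ω) (t : ℝ)
    (ht0 : 0 ≤ t) (ht1 : t ≤ 1) :
    IsProbabilityMeasure (ENNReal.ofReal (1-t) • P + ENNReal.ofReal t • Measure.dirac x) := by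
  constructor
  simp only [Measure.add_apply, Measure.smul_apply, smul_eq_mul, measure_univ, mul_one]
  rw [← ENNReal.ofReal_add (by linarith) ht0]
  norm_num

include hmeas hC in
lemma g_mix (P : Measure Ω) [IsProbabilityMeasure P] (x u : Ω) (t : ℝ)
    (ht0 : 0 ≤ t) (ht1 : t ≤ 1) :
    g f (ENNReal.ofReal (1-t) • P + ENNReal.ofReal t • Measure.dirac x) u
      = (1-t) * g f P u + t * f u x := by
  unfold g
  rw [integral_add_measure ((integrable_slice hmeas hC P u).smul_measure ENNReal.ofReal_ne_top)
      ((integrable_slice hmeas hC (Measure.dirac x) u).smul_measure ENNReal.ofReal_ne_top),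
    integral_smul_measure, integral_smul_measure,
    integral_dirac' _ _ (meas_slice hmeas hC u).stronglyMeasurable,
    ENNReal.toReal_ofReal (by linarith), ENNReal.toReal_ofReal ht0]
  simp [smul_eq_mul]

include hmeas hC hsymm in
lemma En_mix (P : Measure Ω) [IsProbabilityMeasure P] (x : Ω) (t : ℝ)
    (ht0 : 0 ≤ t) (ht1 : t ≤ 1) :
    En f (ENNReal.ofReal (1-t) • P + ENNReal.ofReal t • Measure.dirac x)
      = (1-t)^2 * En f P + 2*t*(1-t) * g f P x + t^2 * f x x := by
  set R := ENNReal.ofReal (1-t) • P + ENNReal.ofReal t • Measure.dirac x with hR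
  have hm2 : Measurable fun u => f u x := by
    have h : (fun u => f u x) = fun u => f x u := funext fun u => hsymm u x
    rw [h]; exact meas_slice hmeas hC x
  have hint2 : Integrable (fun u => f u x) P := by
    have h : (fun u => f u x) = fun u => f x u := funext fun u => hsymm u x
    rw [h]; exact integrable_slice hmeas hC P x
  have hintP : Integrable (fun u => (1-t) * g f P u + t * f u x) P :=
    ((g_integrable hmeas hC P P).const_mul _).add (hint2.const_mul _)
  have hintD : Integrable (fun u => (1-t) * g f P u + t * f u x) (Measure.dirac x) :=
    ((g_integrable hmeas hC P (Measure.dirac x)).const_mul _).add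
      ((integrable_of_bound (Measure.dirac x) _ hm2 C (fun u => hC u x)).const_mul _)
  have hsm : StronglyMeasurable fun u => (1-t) * g f P u + t * f u x :=
    (((g_meas hmeas hC P).const_mul _).add (hm2.const_mul _)).stronglyMeasurable
  have h1 : En f R = ∫ u, (1-t) * g f P u + t * f u x ∂(R) :=
    integral_congr_ae (Filter.Eventually.of_forall fun u =>
      g_mix hmeas hC P x u t ht0 ht1)
  have h2 : ∫ u, f u x ∂P = g f P x := by
    have h : (fun u => f u x) = fun u => f x u := funext fun u => hsymm u x
    rw [h]; rfl
  rw [h1, hR, integral_add_measure (hintP.smul_measure ENNReal.ofReal_ne_top)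
      (hintD.smul_measure ENNReal.ofReal_ne_top),
    integral_smul_measure, integral_smul_measure,
    integral_dirac' _ _ hsm,
    ENNReal.toReal_ofReal (by linarith : (0:ℝ) ≤ 1 - t), ENNReal.toReal_ofReal ht0,
    integral_add ((g_integrable hmeas hC P P).const_mul _) (hint2.const_mul _),
    integral_const_mul, integral_const_mul, h2]
  show (1-t) * ((1-t) * En f P + t * g f P x) + t * ((1-t) * g f P x + t * f x x) = _
  ring

end Stmt4Aux

open Stmt4Aux

set_option maxHeartbeats 2000000 in
theorem stmt_4 {Ω : Type*} [MeasurableSpace Ω] (f : Ω → Ω → ℝ)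
    (hmeas : Measurable (Function.uncurry f))
    (hbdd : ∃ C : ℝ, ∀ x y, |f x y| ≤ C)
    (hsymm : ∀ x y, f x y = f y x) :
    (∃ P : Measure Ω, IsProbabilityMeasure P ∧
      ∀ᵐ x ∂P, ∫ y, f x y ∂P ≤ 0) ∨
    (∀ P : Measure Ω, IsProbabilityMeasure P →
      0 < ∫ x, ∫ y, f x y ∂P ∂P) := by
  classical
  obtain ⟨C₀, hC₀⟩ := hbdd
  by_cases hR : ∀ P : Measure Ω, IsProbabilityMeasure P → 0 < ∫ x, ∫ y, f x y ∂P ∂P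
  · exact Or.inr hR
  left
  push_neg at hR
  obtain ⟨P₀, hP₀, hE₀'⟩ := hR
  haveI := hP₀
  set C := max C₀ 0 with hCdef
  have hC : ∀ x y, |f x y| ≤ C := fun x y => (hC₀ x y).trans (le_max_left _ _)
  have hC0 : (0:ℝ) ≤ C := le_max_right _ _
  have hE₀ : En f P₀ ≤ 0 := hE₀'
  set S : Set ℝ := {r | ∃ P : Measure Ω, IsProbabilityMeasure P ∧ En f P = r} with hSdef
  have hSne : S.Nonempty := ⟨_, P₀, hP₀, rfl⟩
  have hSbd : BddBelow S := by
    refine ⟨-C, fun r hr => ?_⟩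
    obtain ⟨P, hP, rfl⟩ := hr
    haveI := hP
    linarith [abs_le.mp (En_abs_le hmeas hC P)]
  set α := sInf S with hαdef
  have hα_le : ∀ (P : Measure Ω), IsProbabilityMeasure P → α ≤ En f P :=
    fun P hP => csInf_le hSbd ⟨P, hP, rfl⟩
  have hα0 : α ≤ 0 := (hα_le P₀ hP₀).trans hE₀
  have hαC : -C ≤ α := by
    refine le_csInf hSne fun r hr => ?_
    obtain ⟨P, hP, rfl⟩ := hr
    haveI := hP
    linarith [abs_le.mp (En_abs_le hmeas hC P)]
  have key : ∀ (P : Measure Ω), IsProbabilityMeasure P → ∀ ε t : ℝ, 0 < t → t ≤ 1/2 →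
      En f P ≤ α + ε → ε ≤ t^2 → ∀ x, α - (3*C+3)*t ≤ g f P x := by
    intro P hP ε t ht0 ht1 hEP hε x
    haveI := hP
    have hprob := mix_prob P x t (le_of_lt ht0) (by linarith)
    have hge := hα_le _ hprob
    rw [En_mix hmeas hC hsymm P x t (le_of_lt ht0) (by linarith)] at hge
    have hfxx : f x x ≤ C := (abs_le.mp (hC x x)).2
    have h2t : (0:ℝ) < 2*t*(1-t) := by nlinarith
    have hnum : α - (1-t)^2*(α+t^2) - t^2*C ≤ 2*t*(1-t) * g f P x := by
      nlinarith [sq_nonneg (1-t)]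
    have hbr : (0:ℝ) ≤ α - (1-t)^2 - C + (6*C+6)*(1-t) := by nlinarith
    have hfinal : (α - (3*C+3)*t) * (2*t*(1-t)) ≤ α - (1-t)^2*(α+t^2) - t^2*C := by
      nlinarith [mul_nonneg (sq_nonneg t) hbr]
    nlinarith
  have approx : ∀ t : ℝ, 0 < t → t ≤ 1/2 → ∃ P : Measure Ω, IsProbabilityMeasure P ∧
      En f P ≤ α + t^2 ∧ ∀ x, α - (3*C+3)*t ≤ g f P x := by
    intro t ht0 ht1
    have hlt : α < α + t^2 := by nlinarith
    obtain ⟨r, hrS, hr⟩ := exists_lt_of_csInf_lt hSne hlt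
    obtain ⟨P, hP, rfl⟩ := hrS
    exact ⟨P, hP, le_of_lt hr, key P hP (t^2) t ht0 ht1 (le_of_lt hr) le_rfl⟩
  clear hαdef
  clear_value α
  rcases eq_or_lt_of_le hα0 with hαz | hαneg
  · -- α = 0 case
    have hE0 : En f P₀ = 0 := le_antisymm hE₀ (by rw [← hαz]; exact hα_le P₀ hP₀)
    have hg0 : ∀ x, 0 ≤ g f P₀ x := by
      intro x
      by_contra hcon
      push_neg at hcon
      set gx := g f P₀ x with hgx
      have h68 : (0:ℝ) < 6*C+8 := by linarith
      set t := min (1/2 : ℝ) ((-gx)/(6*C+8)) with htdef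
      have ht0 : 0 < t := lt_min (by norm_num) (div_pos (by linarith) h68)
      have ht1 : t ≤ 1/2 := min_le_left _ _
      have hkey := key P₀ hP₀ 0 t ht0 ht1 (by rw [hE0, hαz]; simp) (by positivity) x
      rw [hαz] at hkey
      have ht2 : t ≤ (-gx)/(6*C+8) := min_le_right _ _
      have h1 : (3*C+3) * t ≤ (3*C+3) * ((-gx)/(6*C+8)) :=
        mul_le_mul_of_nonneg_left ht2 (by linarith)
      have h2 : (3*C+3) * ((-gx)/(6*C+8)) ≤ (-gx)/2 := by
        rw [mul_div_assoc', div_le_div_iff₀ h68 two_pos]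
        nlinarith
      linarith
    have hEint : ∫ x, g f P₀ x ∂P₀ = 0 := hE0
    have haez := (integral_eq_zero_iff_of_nonneg hg0 (g_integrable hmeas hC P₀ P₀)).mp hEint
    refine ⟨P₀, hP₀, ?_⟩
    filter_upwards [haez] with x hx
    exact le_of_eq hx
  · -- α < 0 case
    set a := -α with hadef
    have hapos : 0 < a := by simp [hadef]; linarith
    set K := 3*C+3 with hKdef
    have hKpos : (0:ℝ) < K := by simp [hKdef]; linarith
    obtain ⟨θ, hθpos, hθhalf, hθa⟩ : ∃ θ : ℝ, 0 < θ ∧ θ ≤ 1/2 ∧ θ ≤ a/(2*(C+1)) :=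
      ⟨min (a/(2*(C+1))) (1/2 : ℝ), lt_min (div_pos hapos (by linarith)) (by norm_num),
        min_le_right _ _, min_le_left _ _⟩
    obtain ⟨t, ht0, ht1, ht2⟩ : ∃ t : ℝ, 0 < t ∧ t ≤ 1/2 ∧ t ≤ a*θ/(4*(K+1)) :=
      ⟨min (1/2 : ℝ) (a*θ/(4*(K+1))),
        lt_min (by norm_num) (div_pos (mul_pos hapos hθpos) (by linarith)),
        min_le_left _ _, min_le_right _ _⟩
    obtain ⟨P, hP, hEP, hg⟩ := approx t ht0 ht1
    haveI := hP
    set h := g f P with hhdef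
    set A := {x | α/2 < h x} with hAdef
    have hgmeas : Measurable h := g_meas hmeas hC P
    have hAmeas : MeasurableSet A := measurableSet_lt measurable_const hgmeas
    have hintg : Integrable h P := g_integrable hmeas hC P P
    set δ := (P A).toReal with hδdef
    have hδ0 : 0 ≤ δ := ENNReal.toReal_nonneg
    have hmarkov : (a/2 + K*t) * δ ≤ t^2 + K*t := by
      have hnn : 0 ≤ᵐ[P] fun x => h x - (α - K*t) :=
        Filter.Eventually.of_forall fun x => by
          have := hg x
          simp only [Pi.zero_apply]
          linarith
      have hint2 : Integrable (fun x => h x - (α - K*t)) P := hintg.sub (integrable_const _)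
      have h3 := mul_meas_ge_le_integral_of_nonneg hnn hint2 (a/2 + K*t)
      have hsub : A ⊆ {x | a/2 + K*t ≤ h x - (α - K*t)} := by
        intro x hx
        simp only [hAdef, Set.mem_setOf_eq] at hx ⊢
        have : a = -α := hadef
        linarith
      have hmono : (P A).toReal ≤ (P {x | a/2 + K*t ≤ h x - (α - K*t)}).toReal :=
        ENNReal.toReal_mono (measure_ne_top _ _) (measure_mono hsub)
      have hival : ∫ x, (h x - (α - K*t)) ∂P = En f P - (α - K*t) := by
        rw [integral_sub hintg (integrable_const _), integral_const]
        simp [En]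
        rfl
      have hub : ∫ x, (h x - (α - K*t)) ∂P ≤ t^2 + K*t := by
        rw [hival]; linarith
      calc (a/2 + K*t) * δ ≤ (a/2 + K*t) * (P {x | a/2 + K*t ≤ h x - (α - K*t)}).toReal := by
            apply mul_le_mul_of_nonneg_left hmono
            positivity
        _ ≤ ∫ x, (h x - (α - K*t)) ∂P := h3
        _ ≤ t^2 + K*t := hub
    clear_value δ
    clear_value A
    clear_value a K C
    have hδθ : δ ≤ θ := by
      have e1 : t^2 + K*t ≤ t*(1+K) := by nlinarith
      have e2 : t*(1+K) ≤ a*θ/4 := by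
        have hstep : (1+K)*t ≤ (1+K) * (a*θ/(4*(K+1))) :=
          mul_le_mul_of_nonneg_left ht2 (by linarith)
        have hKne : K+1 ≠ 0 := by linarith
        have heq : (1+K) * (a*θ/(4*(K+1))) = a*θ/4 := by
          field_simp
          ring
        have hcomm : t*(1+K) = (1+K)*t := by ring
        linarith
      have hKtδ : 0 ≤ K*t*δ := mul_nonneg (mul_nonneg hKpos.le ht0.le) hδ0
      have hexp : (a/2+K*t)*δ = (a/2)*δ + K*t*δ := by ring
      have e3 : (a/2) * δ ≤ a*θ/4 := by linarith
      have e4 : a * δ ≤ a * (θ/2) := by linarith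
      have e5 : δ ≤ θ/2 := (mul_le_mul_iff_right₀ hapos).mp e4
      linarith
    have hδhalf : δ ≤ 1/2 := hδθ.trans hθhalf
    have hδC : α/2 + C*δ ≤ 0 := by
      have h1 : C*δ ≤ C*(a/(2*(C+1))) :=
        mul_le_mul_of_nonneg_left (hδθ.trans hθa) hC0
      have h2 : C * (a/(2*(C+1))) ≤ a/2 := by
        rw [mul_div_assoc', div_le_div_iff₀ (by linarith) two_pos]
        linarith
      have h3 : α/2 = -(a/2) := by rw [hadef]; ring
      linarith
    have hAcval : (P Aᶜ).toReal = 1 - δ := by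
      rw [measure_compl hAmeas (measure_ne_top _ _), measure_univ,
        ENNReal.toReal_sub_of_le prob_le_one (by simp)]
      simp [hδdef]
    have hAcne : P Aᶜ ≠ 0 := by
      intro h0
      rw [h0] at hAcval
      simp at hAcval
      linarith
    have hAcfin : P Aᶜ ≠ ⊤ := measure_ne_top _ _
    set P' : Measure Ω := (P Aᶜ)⁻¹ • P.restrict Aᶜ with hP'def
    haveI hP'prob : IsProbabilityMeasure P' := by
      constructor
      rw [hP'def, Measure.smul_apply, Measure.restrict_apply MeasurableSet.univ,
        Set.univ_inter, smul_eq_mul, ENNReal.inv_mul_cancel hAcne hAcfin]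
    refine ⟨P', hP'prob, ?_⟩
    have hP'A : P' A = 0 := by
      rw [hP'def, Measure.smul_apply, Measure.restrict_apply hAmeas]
      simp
    have haemem : ∀ᵐ x ∂P', x ∉ A := by
      rw [ae_iff]
      simpa using hP'A
    filter_upwards [haemem] with x hx
    have hxA : h x ≤ α/2 := not_lt.mp (by simpa [hAdef] using hx)
    have hcalc : ∫ y, f x y ∂P' = ((P Aᶜ)⁻¹).toReal * ∫ y, f x y ∂(P.restrict Aᶜ) := by
      rw [hP'def, integral_smul_measure]
      rfl
    have hsplit : (∫ y in A, f x y ∂P) + ∫ y in Aᶜ, f x y ∂P = ∫ y, f x y ∂P :=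
      integral_add_compl hAmeas (integrable_slice hmeas hC P x)
    have hbA : |∫ y in A, f x y ∂P| ≤ C * δ := by
      have hnb := norm_integral_le_of_norm_le_const (μ := P.restrict A) (f := f x) (C := C)
        (Filter.Eventually.of_forall fun y => by simpa [Real.norm_eq_abs] using hC x y)
      simpa [Real.norm_eq_abs, Measure.restrict_apply_univ, hδdef, measureReal_def] using hnb
    have hhx : ∫ y, f x y ∂P = h x := rfl
    rw [hhx] at hsplit
    set I1 := ∫ y in A, f x y ∂P with hI1def
    set I2 := ∫ y in Aᶜ, f x y ∂P with hI2def
    clear_value I1 I2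
    have hcore : I2 ≤ 0 := by
      have hlow := (abs_le.mp hbA).1
      linarith only [hlow, hsplit, hxA, hδC]
    have hfinal : ((P Aᶜ)⁻¹).toReal * I2 ≤ 0 :=
      mul_nonpos_of_nonneg_of_nonpos ENNReal.toReal_nonneg hcore
    exact hcalc.trans_le hfinal
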